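/- Let p be an odd prime, k ≥ 2 an integer, and α an integer with α² = 2^k − p. Then there are no odd integers W, z satisfying 2W² = 1 − 2α·z² − p·z⁴. -/
import Mathlib

lemma key16 : ∀ m n b c : ZMod 8, (c = 0 ∨ c = 4) →
    2 * (2*m+1)^2 ≠ 1 - 2*(2*b+1)*(2*n+1)^2 - (c - (2*b+1)^2)*(2*n+1)^4 := by
  decide

theorem stmt_16 (p : ℕ) (hp : p.Prime) (hodd : Odd p) (k : ℕ) (hk : 2 ≤ k)
    (α : ℤ) (hα : α ^ 2 = 2 ^ k - (p : ℤ)) :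
    ¬ ∃ W z : ℤ, Odd W ∧ Odd z ∧
      2 * W ^ 2 = 1 - 2 * α * z ^ 2 - (p : ℤ) * z ^ 4 := by
  rintro ⟨W, z, ⟨m, hm⟩, ⟨n, hn⟩, heq⟩
  -- α is odd
  have hαodd : Odd α := by
    have h2 : Odd (α ^ 2) := by
      rw [hα]
      obtain ⟨t, ht⟩ := hodd
      refine ⟨2 ^ (k-1) - t - 1, ?_⟩
      have : (2:ℤ)^k = 2 * 2^(k-1) := by
        rw [← pow_succ']
        congr 1
        omega
      push_cast [ht, this]; ring
    exact (Int.odd_pow' two_ne_zero).mp h2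
  obtain ⟨b, hb⟩ := hαodd
  -- cast to ZMod 8
  have hc : ((2:ZMod 8) ^ k = 0 ∨ (2:ZMod 8) ^ k = 4) := by
    rcases Nat.lt_or_ge k 3 with h | h
    · right
      have : k = 2 := by omega
      subst this; decide
    · left
      have : (2:ZMod 8)^k = 2^3 * 2^(k-3) := by
        rw [← pow_add]; congr 1; omega
      rw [this, show (2:ZMod 8)^3 = 0 from by decide, zero_mul]
  have hp8 : ((p : ZMod 8)) = 2^k - (α : ZMod 8)^2 := by
    have := congrArg (fun x : ℤ => (x : ZMod 8)) hα
    push_cast at this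
    linear_combination this
  have heq8 := congrArg (fun x : ℤ => (x : ZMod 8)) heq
  push_cast [hm, hn, hb] at heq8
  rw [hp8] at heq8
  push_cast [hb] at heq8
  exact key16 m n b (2^k) hc (by linear_combination heq8)
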